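/- Let V = (⊕_{i∈ℤ} ℂL_i) ⊕ (⊕_{i∈ℤ} ℂH_i) be the Novikov algebra with product L_i∘L_j = L_{i+j}, L_i∘H_j = 0, H_j∘L_i = H_{i+j}, H_i∘H_j = 0 (trivial Lie bracket). Then bilinear forms α_0, α_1, α_2, α_3 : V×V → ℂ satisfy the identities (N1)–(N5) if and only if there exist functions f, g, h, k, l : ℤ → ℂ such that for all i, j ∈ ℤ: α_3(L_i, L_j) = f(i+j); α_1(L_i, L_j) = g(i+j); α_1(L_i, H_j) = α_1(H_j, L_i) = h(i+j); α_2(L_i, H_j) = −α_2(H_j, L_i) = k(i+j); α_1(H_i, H_j) = l(i+j); and α_0 = 0, α_3(L_i, H_j) = α_3(H_j, L_i) = α_3(H_i, H_j) = 0, α_2(L_i, L_j) = α_2(H_i, H_j) = 0. -/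

import Mathlib

/-- Structure constants of the Novikov algebra
`V = (⊕_{i∈ℤ} ℂL_i) ⊕ (⊕_{i∈ℤ} ℂH_i)` on basis indices
(`Sum.inl i ↦ L_i`, `Sum.inr i ↦ H_i`):
`L_i∘L_j = L_{i+j}`, `L_i∘H_j = 0`, `H_i∘L_j = H_{i+j}`, `H_i∘H_j = 0`. -/
noncomputable def chvBase : ℤ ⊕ ℤ → ℤ ⊕ ℤ → ((ℤ ⊕ ℤ) →₀ ℂ)
  | Sum.inl i, Sum.inl j => Finsupp.single (Sum.inl (i + j)) 1
  | Sum.inl _, Sum.inr _ => 0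
  | Sum.inr i, Sum.inl j => Finsupp.single (Sum.inr (i + j)) 1
  | Sum.inr _, Sum.inr _ => 0

/-- The Novikov product on `V = (⊕_{i∈ℤ} ℂL_i) ⊕ (⊕_{i∈ℤ} ℂH_i)`
(realized as `(ℤ ⊕ ℤ) →₀ ℂ`). -/
noncomputable def circCHV (u v : (ℤ ⊕ ℤ) →₀ ℂ) : (ℤ ⊕ ℤ) →₀ ℂ :=
  u.sum fun p x => v.sum fun q y => (x * y) • chvBase p q

/-- The basis vector `L_i`. -/
noncomputable def LCHV (i : ℤ) : (ℤ ⊕ ℤ) →₀ ℂ := Finsupp.single (Sum.inl i) 1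

/-- The basis vector `H_i`. -/
noncomputable def HCHV (i : ℤ) : (ℤ ⊕ ℤ) →₀ ℂ := Finsupp.single (Sum.inr i) 1


section aux
abbrev Vchv := (ℤ ⊕ ℤ) →₀ ℂ

lemma circ_zero_left (v) : circCHV 0 v = 0 := Finsupp.sum_zero_index

lemma circ_zero_right (u) : circCHV u 0 = 0 := by
  unfold circCHV; simp [Finsupp.sum_zero_index]

lemma circ_add_left (u1 u2 v) : circCHV (u1+u2) v = circCHV u1 v + circCHV u2 v := by
  unfold circCHV
  apply Finsupp.sum_add_index' <;> intros <;>
    simp [add_mul, add_smul, Finsupp.sum_add]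

lemma circ_add_right (u v1 v2) : circCHV u (v1+v2) = circCHV u v1 + circCHV u v2 := by
  unfold circCHV
  rw [← Finsupp.sum_add]
  apply Finsupp.sum_congr
  intro p _
  apply Finsupp.sum_add_index' <;> intros <;> simp [mul_add, add_smul]

lemma circ_smul_left (c : ℂ) (u v) : circCHV (c • u) v = c • circCHV u v := by
  unfold circCHV
  rw [Finsupp.sum_smul_index', Finsupp.smul_sum]
  · apply Finsupp.sum_congr
    intro p _
    rw [Finsupp.smul_sum]
    apply Finsupp.sum_congr
    intro q _
    simp [smul_smul, smul_eq_mul, mul_assoc]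
  · intro p; simp

lemma circ_smul_right (c : ℂ) (u v) : circCHV u (c • v) = c • circCHV u v := by
  unfold circCHV
  rw [Finsupp.smul_sum]
  apply Finsupp.sum_congr
  intro p _
  rw [Finsupp.sum_smul_index', Finsupp.smul_sum]
  · apply Finsupp.sum_congr
    intro q _
    simp [smul_smul, smul_eq_mul]; ring_nf
  · intro q; simp

lemma circ_single (p q : ℤ ⊕ ℤ) (x y : ℂ) :
    circCHV (Finsupp.single p x) (Finsupp.single q y) = (x * y) • chvBase p q := by
  unfold circCHV
  rw [Finsupp.sum_single_index, Finsupp.sum_single_index] <;> simp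

@[simp] lemma circ_LL (i j : ℤ) : circCHV (LCHV i) (LCHV j) = LCHV (i+j) := by
  simp [LCHV, circ_single, chvBase]
@[simp] lemma circ_LH (i j : ℤ) : circCHV (LCHV i) (HCHV j) = 0 := by
  simp [LCHV, HCHV, circ_single, chvBase]
@[simp] lemma circ_HL (i j : ℤ) : circCHV (HCHV i) (LCHV j) = HCHV (i+j) := by
  simp [LCHV, HCHV, circ_single, chvBase]
@[simp] lemma circ_HH (i j : ℤ) : circCHV (HCHV i) (HCHV j) = 0 := by
  simp [HCHV, circ_single, chvBase]

lemma single_inl (i : ℤ) : (Finsupp.single (Sum.inl i) 1 : Vchv) = LCHV i := rfl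
lemma single_inr (i : ℤ) : (Finsupp.single (Sum.inr i) 1 : Vchv) = HCHV i := rfl

noncomputable def circL : Vchv →ₗ[ℂ] Vchv →ₗ[ℂ] Vchv :=
  LinearMap.mk₂ ℂ circCHV circ_add_left circ_smul_left circ_add_right circ_smul_right

noncomputable def TBchv (β : Vchv →ₗ[ℂ] Vchv →ₗ[ℂ] ℂ) :
    Vchv →ₗ[ℂ] Vchv →ₗ[ℂ] Vchv →ₗ[ℂ] ℂ :=
  circL.compr₂ β

@[simp] lemma TBchv_apply (β : Vchv →ₗ[ℂ] Vchv →ₗ[ℂ] ℂ) (a b c : Vchv) :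
    TBchv β a b c = β (circCHV a b) c := by
  simp [TBchv, circL]

noncomputable def sw12chv (T : Vchv →ₗ[ℂ] Vchv →ₗ[ℂ] Vchv →ₗ[ℂ] ℂ) :
    Vchv →ₗ[ℂ] Vchv →ₗ[ℂ] Vchv →ₗ[ℂ] ℂ := T.flip

@[simp] lemma sw12chv_apply (T) (a b c : Vchv) : sw12chv T a b c = T b a c := rfl

noncomputable def sw23chv (T : Vchv →ₗ[ℂ] Vchv →ₗ[ℂ] Vchv →ₗ[ℂ] ℂ) :
    Vchv →ₗ[ℂ] Vchv →ₗ[ℂ] Vchv →ₗ[ℂ] ℂ := LinearMap.lflip.comp T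

@[simp] lemma sw23chv_apply (T) (a b c : Vchv) : sw23chv T a b c = T a c b := rfl

noncomputable def sw13chv (T) := sw12chv (sw23chv (sw12chv T))
@[simp] lemma sw13chv_apply (T) (a b c : Vchv) : sw13chv T a b c = T c b a := rfl
noncomputable def cycchv (T) := sw12chv (sw23chv T)
@[simp] lemma cycchv_apply (T) (a b c : Vchv) : cycchv T a b c = T b c a := rfl

lemma bil_zero (β : Vchv →ₗ[ℂ] Vchv →ₗ[ℂ] ℂ)
    (h : ∀ p q, β (Finsupp.single p 1) (Finsupp.single q 1) = 0) :
    ∀ a b, β a b = 0 := by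
  intro a b
  induction a using Finsupp.induction_linear with
  | zero => simp
  | add x y hx hy => simp [hx, hy]
  | single p x =>
    induction b using Finsupp.induction_linear with
    | zero => simp
    | add x' y' hx hy => simp [hx, hy]
    | single q y =>
      rw [← Finsupp.smul_single_one p x, ← Finsupp.smul_single_one q y]
      simp only [map_smul, LinearMap.smul_apply, smul_eq_mul, h, mul_zero]

lemma tri_zero (T : Vchv →ₗ[ℂ] Vchv →ₗ[ℂ] Vchv →ₗ[ℂ] ℂ)
    (h : ∀ p q r, T (Finsupp.single p 1) (Finsupp.single q 1) (Finsupp.single r 1) = 0) :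
    ∀ a b c, T a b c = 0 := by
  intro a b c
  induction a using Finsupp.induction_linear with
  | zero => simp
  | add x y hx hy => simp [hx, hy]
  | single p x =>
    induction b using Finsupp.induction_linear with
    | zero => simp
    | add x' y' hx hy => simp [hx, hy]
    | single q y =>
      induction c using Finsupp.induction_linear with
      | zero => simp
      | add x' y' hx hy => simp [hx, hy]
      | single r z =>
        rw [← Finsupp.smul_single_one p x, ← Finsupp.smul_single_one q y,
          ← Finsupp.smul_single_one r z]
        simp only [map_smul, LinearMap.smul_apply, smul_eq_mul, h, mul_zero]
end aux


/-- For the Novikov algebra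
`V = (⊕_{i∈ℤ} ℂL_i) ⊕ (⊕_{i∈ℤ} ℂH_i)` with `L_i∘L_j = L_{i+j}`, `L_i∘H_j = 0`,
`H_j∘L_i = H_{i+j}`, `H_i∘H_j = 0` (trivial Lie bracket): bilinear forms
`α_0, α_1, α_2, α_3` satisfy (N1)–(N5) if and only if there are functions
`f, g, h, k, l : ℤ → ℂ` realizing the values listed in the statement and all the
remaining basis values (and all of `α_0`) vanish. -/
theorem stmt_17 (α0 α1 α2 α3 : ((ℤ ⊕ ℤ) →₀ ℂ) →ₗ[ℂ] ((ℤ ⊕ ℤ) →₀ ℂ) →ₗ[ℂ] ℂ) :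
    -- the identities (N1)–(N5) ...
    ((∀ a b : (ℤ ⊕ ℤ) →₀ ℂ, α0 a b = - α0 b a)
      ∧ (∀ a b : (ℤ ⊕ ℤ) →₀ ℂ, α1 a b = α1 b a)
      ∧ (∀ a b : (ℤ ⊕ ℤ) →₀ ℂ, α2 a b = - α2 b a)
      ∧ (∀ a b : (ℤ ⊕ ℤ) →₀ ℂ, α3 a b = α3 b a)
      -- (N2)
      ∧ (∀ a b c : (ℤ ⊕ ℤ) →₀ ℂ, α3 a (circCHV c b) = α3 (circCHV a b) c
          ∧ α3 (circCHV a b) c = α3 (circCHV b a) c)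
      -- (N3)
      ∧ (∀ a b c : (ℤ ⊕ ℤ) →₀ ℂ, α2 a (circCHV b c) + α2 (circCHV b a) c = α2 (circCHV a b) c
          ∧ α2 (circCHV a b) c = α2 a (circCHV c b))
      -- (N4)
      ∧ (∀ a b c : (ℤ ⊕ ℤ) →₀ ℂ, α1 a (circCHV c b) = α1 (circCHV a b) c)
      -- (N5)
      ∧ (∀ a b c : (ℤ ⊕ ℤ) →₀ ℂ, α0 (circCHV c a) b - α0 (circCHV c b) a
          = α0 (circCHV a b) c - α0 (circCHV a c) b))
    -- ... hold if and only if: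
    ↔ (∃ f g h k l : ℤ → ℂ,
        (∀ a b : (ℤ ⊕ ℤ) →₀ ℂ, α0 a b = 0)
          ∧ ∀ i j : ℤ,
              α3 (LCHV i) (LCHV j) = f (i + j)
                ∧ α1 (LCHV i) (LCHV j) = g (i + j)
                ∧ α1 (LCHV i) (HCHV j) = h (i + j)
                ∧ α1 (HCHV j) (LCHV i) = h (i + j)
                ∧ α2 (LCHV i) (HCHV j) = k (i + j)
                ∧ α2 (HCHV j) (LCHV i) = -k (i + j)
                ∧ α1 (HCHV i) (HCHV j) = l (i + j)
                ∧ α3 (LCHV i) (HCHV j) = 0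
                ∧ α3 (HCHV j) (LCHV i) = 0
                ∧ α3 (HCHV i) (HCHV j) = 0
                ∧ α2 (LCHV i) (LCHV j) = 0
                ∧ α2 (HCHV i) (HCHV j) = 0) := by
  constructor
  · rintro ⟨h01, h11, h21, h31, hN2, hN3, hN4, hN5⟩
    have hα3H : ∀ n (c : Vchv), α3 (HCHV n) c = 0 := by
      intro n c
      have h := (hN2 (LCHV 0) (HCHV n) c).2
      simpa using h.symm
    refine ⟨fun n => α3 (LCHV n) (LCHV 0), fun n => α1 (LCHV n) (LCHV 0),
      fun n => α1 (LCHV n) (HCHV 0), fun n => α2 (LCHV n) (HCHV 0),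
      fun n => α1 (HCHV n) (HCHV 0), ?_, ?_⟩
    · -- α0 = 0
      have hLH : ∀ i j, α0 (LCHV i) (HCHV j) = 0 := by
        intro i j
        have h := hN5 (LCHV i) (HCHV j) (LCHV 0)
        simp only [circ_LL, circ_LH, circ_HL, circ_HH, zero_add, add_zero, map_zero,
          LinearMap.zero_apply] at h
        linear_combination h / 2
      have hHH : ∀ i j, α0 (HCHV i) (HCHV j) = 0 := by
        intro i j
        have h := hN5 (HCHV i) (HCHV j) (LCHV 0)
        simp only [circ_LL, circ_LH, circ_HL, circ_HH, zero_add, add_zero, map_zero,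
          LinearMap.zero_apply] at h
        linear_combination h
      have hLL : ∀ i j, α0 (LCHV i) (LCHV j) = 0 := by
        intro i j
        have hA := hN5 (LCHV 0) (LCHV j) (LCHV i)
        have hB := hN5 (LCHV j) (LCHV 0) (LCHV i)
        have hC := h01 (LCHV j) (LCHV i)
        simp only [circ_LL, zero_add, add_zero] at hA hB
        rw [add_comm j i] at hB
        linear_combination hA / 3 + hB / 6 + hC / 2
      apply bil_zero
      rintro (p | p) (q | q)
      · rw [single_inl, single_inl]; exact hLL p q
      · rw [single_inl, single_inr]; exact hLH p q
      · rw [single_inr, single_inl]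
        rw [h01]; simp [hLH q p]
      · rw [single_inr, single_inr]; exact hHH p q
    · intro i j
      have c1 : α3 (LCHV i) (LCHV j) = α3 (LCHV (i+j)) (LCHV 0) := by
        have h := (hN2 (LCHV i) (LCHV j) (LCHV 0)).1
        simpa using h
      have c2 : α1 (LCHV i) (LCHV j) = α1 (LCHV (i+j)) (LCHV 0) := by
        have h := hN4 (LCHV i) (LCHV j) (LCHV 0)
        simpa using h
      have c3 : α1 (LCHV i) (HCHV j) = α1 (LCHV (i+j)) (HCHV 0) := by
        have h := hN4 (LCHV i) (LCHV j) (HCHV 0)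
        simpa using h
      have c5 : α2 (LCHV i) (HCHV j) = α2 (LCHV (i+j)) (HCHV 0) := by
        have h := (hN3 (LCHV i) (LCHV j) (HCHV 0)).2
        simpa using h.symm
      have c7 : α1 (HCHV i) (HCHV j) = α1 (HCHV (i+j)) (HCHV 0) := by
        have h := hN4 (HCHV i) (LCHV j) (HCHV 0)
        simpa using h
      have c11 : α2 (LCHV i) (LCHV j) = 0 := by
        have h := (hN3 (LCHV i) (LCHV 0) (LCHV j)).1
        simp only [circ_LL, zero_add, add_zero] at h
        linear_combination h
      have c12 : α2 (HCHV i) (HCHV j) = 0 := by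
        have h := (hN3 (HCHV i) (LCHV 0) (HCHV j)).1
        simpa using h.symm
      refine ⟨c1, c2, c3, ?_, c5, ?_, c7, ?_, ?_, ?_, c11, c12⟩
      · rw [h11]; exact c3
      · rw [h21]; rw [c5]
      · rw [h31]; exact hα3H j (LCHV i)
      · exact hα3H j (LCHV i)
      · exact hα3H i (HCHV j)
  · rintro ⟨f, g, h, k, l, h0, hv⟩
    have e3LL : ∀ i j, α3 (LCHV i) (LCHV j) = f (i+j) := fun i j => (hv i j).1
    have e1LL : ∀ i j, α1 (LCHV i) (LCHV j) = g (i+j) := fun i j => (hv i j).2.1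
    have e1LH : ∀ i j, α1 (LCHV i) (HCHV j) = h (i+j) := fun i j => (hv i j).2.2.1
    have e1HL : ∀ i j, α1 (HCHV i) (LCHV j) = h (j+i) := fun i j => (hv j i).2.2.2.1
    have e2LH : ∀ i j, α2 (LCHV i) (HCHV j) = k (i+j) := fun i j => (hv i j).2.2.2.2.1
    have e2HL : ∀ i j, α2 (HCHV i) (LCHV j) = -k (j+i) := fun i j => (hv j i).2.2.2.2.2.1
    have e1HH : ∀ i j, α1 (HCHV i) (HCHV j) = l (i+j) := fun i j => (hv i j).2.2.2.2.2.2.1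
    have e3LH : ∀ i j, α3 (LCHV i) (HCHV j) = 0 := fun i j => (hv i j).2.2.2.2.2.2.2.1
    have e3HL : ∀ i j, α3 (HCHV i) (LCHV j) = 0 := fun i j => (hv j i).2.2.2.2.2.2.2.2.1
    have e3HH : ∀ i j, α3 (HCHV i) (HCHV j) = 0 := fun i j => (hv i j).2.2.2.2.2.2.2.2.2.1
    have e2LL : ∀ i j, α2 (LCHV i) (LCHV j) = 0 := fun i j => (hv i j).2.2.2.2.2.2.2.2.2.2.1
    have e2HH : ∀ i j, α2 (HCHV i) (HCHV j) = 0 := fun i j => (hv i j).2.2.2.2.2.2.2.2.2.2.2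
    refine ⟨?_, ?_, ?_, ?_, ?_, ?_, ?_, ?_⟩
    · intro a b; simp [h0]
    · -- α1 symmetric
      have hz := bil_zero (α1 - α1.flip) (by
        rintro (i | i) (j | j) <;>
          simp [single_inl, single_inr, e1LL, e1LH, e1HL, e1HH, add_comm])
      intro a b
      have := hz a b
      simpa [sub_eq_zero] using this
    · -- α2 antisymmetric
      have hz := bil_zero (α2 + α2.flip) (by
        rintro (i | i) (j | j) <;>
          simp [single_inl, single_inr, e2LL, e2LH, e2HL, e2HH, add_comm])
      intro a b
      have := hz a b
      simp only [LinearMap.add_apply, LinearMap.flip_apply] at this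
      linear_combination this
    · -- α3 symmetric
      have hz := bil_zero (α3 - α3.flip) (by
        rintro (i | i) (j | j) <;>
          simp [single_inl, single_inr, e3LL, e3LH, e3HL, e3HH, add_comm])
      intro a b
      have := hz a b
      simpa [sub_eq_zero] using this
    · -- (N2)
      have hz1 := tri_zero (sw13chv (TBchv α3.flip) - TBchv α3) (by
        rintro (i | i) (j | j) (m | m) <;>
          (simp only [LinearMap.sub_apply, LinearMap.add_apply, sw13chv_apply, sw12chv_apply, sw23chv_apply, cycchv_apply, TBchv_apply, LinearMap.flip_apply, single_inl, single_inr, circ_LL, circ_LH, circ_HL, circ_HH, map_zero, LinearMap.zero_apply, e3LL, e3LH, e3HL, e3HH, sub_self, sub_zero, zero_sub, neg_eq_zero, zero_add, add_zero, add_assoc, add_comm, add_left_comm] <;> try ring))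
      have hz2 := tri_zero (TBchv α3 - sw12chv (TBchv α3)) (by
        rintro (i | i) (j | j) (m | m) <;>
          (simp only [LinearMap.sub_apply, LinearMap.add_apply, sw13chv_apply, sw12chv_apply, sw23chv_apply, cycchv_apply, TBchv_apply, LinearMap.flip_apply, single_inl, single_inr, circ_LL, circ_LH, circ_HL, circ_HH, map_zero, LinearMap.zero_apply, e3LL, e3LH, e3HL, e3HH, sub_self, sub_zero, zero_sub, neg_eq_zero, zero_add, add_zero, add_assoc, add_comm, add_left_comm] <;> try ring))
      intro a b c
      constructor
      · have := hz1 a b c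
        simpa [sub_eq_zero] using this
      · have := hz2 a b c
        simpa [sub_eq_zero] using this
    · -- (N3)
      have hz1 := tri_zero (cycchv (TBchv α2.flip) + sw12chv (TBchv α2) - TBchv α2) (by
        rintro (i | i) (j | j) (m | m) <;>
          (simp only [LinearMap.sub_apply, LinearMap.add_apply, sw13chv_apply, sw12chv_apply, sw23chv_apply, cycchv_apply, TBchv_apply, LinearMap.flip_apply, single_inl, single_inr, circ_LL, circ_LH, circ_HL, circ_HH, map_zero, LinearMap.zero_apply, e2LL, e2LH, e2HL, e2HH, sub_self, sub_zero, zero_sub, neg_eq_zero, zero_add, add_zero, add_assoc, add_comm, add_left_comm] <;> try ring))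
      have hz2 := tri_zero (TBchv α2 - sw13chv (TBchv α2.flip)) (by
        rintro (i | i) (j | j) (m | m) <;>
          (simp only [LinearMap.sub_apply, LinearMap.add_apply, sw13chv_apply, sw12chv_apply, sw23chv_apply, cycchv_apply, TBchv_apply, LinearMap.flip_apply, single_inl, single_inr, circ_LL, circ_LH, circ_HL, circ_HH, map_zero, LinearMap.zero_apply, e2LL, e2LH, e2HL, e2HH, sub_self, sub_zero, zero_sub, neg_eq_zero, zero_add, add_zero, add_assoc, add_comm, add_left_comm] <;> try ring))
      intro a b c
      constructor
      · have := hz1 a b c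
        simp only [LinearMap.sub_apply, LinearMap.add_apply, cycchv_apply, sw12chv_apply,
          TBchv_apply, LinearMap.flip_apply, sub_eq_zero] at this
        exact this
      · have := hz2 a b c
        simpa [sub_eq_zero] using this
    · -- (N4)
      have hz := tri_zero (sw13chv (TBchv α1.flip) - TBchv α1) (by
        rintro (i | i) (j | j) (m | m) <;>
          (simp only [LinearMap.sub_apply, LinearMap.add_apply, sw13chv_apply, sw12chv_apply, sw23chv_apply, cycchv_apply, TBchv_apply, LinearMap.flip_apply, single_inl, single_inr, circ_LL, circ_LH, circ_HL, circ_HH, map_zero, LinearMap.zero_apply, e1LL, e1LH, e1HL, e1HH, sub_self, sub_zero, zero_sub, neg_eq_zero, zero_add, add_zero, add_assoc, add_comm, add_left_comm] <;> try ring))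
      intro a b c
      have := hz a b c
      simpa [sub_eq_zero] using this
    · -- (N5)
      intro a b c; simp [h0]
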